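/- The evidential negative log-likelihood loss equals the negative logarithm of the NIG model evidence: for any y, δ ∈ ℝ, γ > 0, α > 0, β > 0, setting Ω = 2β(1+γ) and Ψ = Γ(α)/Γ(α+1/2), the negative logarithm of the double Lebesgue integral over s ∈ (0,∞) and μ ∈ ℝ of the Gaussian likelihood (1/√(2πs)) · exp(−(y−μ)²/(2s)) times the NIG density p(μ,s) = (β^α/Γ(α)) · (√γ/√(2πs)) · s^{−(α+1)} · exp(−(2β+γ(δ−μ)²)/(2s)) equals (1/2)·log(π/γ) − α·log(Ω) + (α+1/2)·log((y−δ)²γ + Ω) + log(Ψ). -/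

import Mathlib

open MeasureTheory

section NigAux
open Set Real

lemma nig_integral_B {a r : ℝ} (ha : 0 < a) (hr : 0 < r) :
    ∫ s in Set.Ioi (0:ℝ), s ^ (-(a+1)) * Real.exp (-(r * s⁻¹)) = (1/r)^a * Real.Gamma a := by
  rw [← Real.integral_rpow_mul_exp_neg_mul_Ioi ha hr,
    ← integral_comp_rpow_Ioi (fun t => t ^ (a-1) * Real.exp (-(r*t))) (p := -1) (by norm_num)]
  refine setIntegral_congr_fun measurableSet_Ioi (fun x hx => ?_)
  have hx0 : (0:ℝ) < x := hx
  rw [Real.rpow_neg_one, smul_eq_mul, Real.inv_rpow hx0.le, ← Real.rpow_neg hx0.le,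
    show ((-1:ℝ)-1) = -2 by norm_num]
  rw [show |(-1:ℝ)| * x ^ (-2:ℝ) * (x ^ (-(a-1)) * Real.exp (-(r * x⁻¹)))
      = x ^ (-2:ℝ) * x ^ (-(a-1)) * Real.exp (-(r * x⁻¹)) by rw [abs_neg, abs_one]; ring,
    ← Real.rpow_add hx0]
  norm_num
  ring_nf

lemma nig_gauss_shift (b c : ℝ) :
    ∫ μ : ℝ, Real.exp (-(b * (μ - c)^2)) = Real.sqrt (Real.pi / b) := by
  have h := integral_sub_right_eq_self (μ := volume) (fun μ => Real.exp (-(b * μ^2))) c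
  rw [h]
  simpa [neg_mul] using integral_gaussian b

end NigAux

/-- The Normal-Inverse-Gamma (NIG) density with parameters `δ γ α β`, as a function of
the Gaussian mean `μ` and the Gaussian variance `s = σ²`. -/
noncomputable def nigPdf (δ γ α β μ s : ℝ) : ℝ :=
  (β ^ α / Real.Gamma α) * (Real.sqrt γ / Real.sqrt (2 * Real.pi * s)) *
    s ^ (-(α + 1)) * Real.exp (-(2 * β + γ * (δ - μ) ^ 2) / (2 * s))

/-- The Gaussian likelihood of an observation `y` given mean `μ` and variance `s`. -/
noncomputable def gaussPdf (y μ s : ℝ) : ℝ :=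
  (1 / Real.sqrt (2 * Real.pi * s)) * Real.exp (-(y - μ) ^ 2 / (2 * s))

section NigInner
open Set Real

lemma nig_inner_eq (y δ γ α β s : ℝ) (hγ : 0 < γ) (hs : 0 < s) :
    ∫ μ : ℝ, gaussPdf y μ s * nigPdf δ γ α β μ s =
      (β ^ α / Real.Gamma α * (Real.sqrt γ * Real.sqrt (2 * Real.pi / (1 + γ)) / (2 * Real.pi))) *
        (s ^ (-(α + 1/2 + 1)) *
          Real.exp (-((β + γ * (y - δ)^2 / (2 * (1 + γ))) * s⁻¹))) := by
  have h1γ : (0:ℝ) < 1 + γ := by linarith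
  have hπ : (0:ℝ) < Real.pi := Real.pi_pos
  have hb : (0:ℝ) < (1 + γ) / (2 * s) := by positivity
  have key : ∀ μ : ℝ, gaussPdf y μ s * nigPdf δ γ α β μ s =
      ((1 / Real.sqrt (2 * Real.pi * s)) * ((β ^ α / Real.Gamma α) *
        (Real.sqrt γ / Real.sqrt (2 * Real.pi * s)) * s ^ (-(α + 1)) *
          Real.exp (-((β + γ * (y - δ)^2 / (2 * (1 + γ))) * s⁻¹)))) *
        Real.exp (-(((1 + γ) / (2 * s)) * (μ - (y + γ * δ) / (1 + γ))^2)) := by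
    intro μ
    have hexp : Real.exp (-(y - μ)^2 / (2 * s)) * Real.exp (-(2 * β + γ * (δ - μ)^2) / (2 * s))
        = Real.exp (-((β + γ * (y - δ)^2 / (2 * (1 + γ))) * s⁻¹)) *
          Real.exp (-(((1 + γ) / (2 * s)) * (μ - (y + γ * δ) / (1 + γ))^2)) := by
      rw [← Real.exp_add, ← Real.exp_add]
      congr 1
      field_simp
      ring
    have h2 : gaussPdf y μ s * nigPdf δ γ α β μ s
        = ((1 / Real.sqrt (2 * Real.pi * s)) * ((β ^ α / Real.Gamma α) *
            (Real.sqrt γ / Real.sqrt (2 * Real.pi * s)) * s ^ (-(α + 1)))) *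
          (Real.exp (-(y - μ)^2 / (2 * s)) *
            Real.exp (-(2 * β + γ * (δ - μ)^2) / (2 * s))) := by
      unfold gaussPdf nigPdf; ring
    rw [h2, hexp]; ring
  simp_rw [key]
  rw [integral_const_mul, nig_gauss_shift]
  have hπb : Real.sqrt (Real.pi / ((1 + γ) / (2 * s)))
      = Real.sqrt (2 * Real.pi / (1 + γ)) * Real.sqrt s := by
    rw [show Real.pi / ((1 + γ) / (2 * s)) = (2 * Real.pi / (1 + γ)) * s by field_simp,
      Real.sqrt_mul (by positivity) s]
  rw [hπb]
  have hss : Real.sqrt (2 * Real.pi * s) * Real.sqrt (2 * Real.pi * s) = 2 * Real.pi * s := by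
    exact Real.mul_self_sqrt (by positivity)
  have hpow : s ^ (-(α + 1)) * Real.sqrt s / (2 * Real.pi * s)
      = s ^ (-(α + 1/2 + 1)) / (2 * Real.pi) := by
    rw [Real.sqrt_eq_rpow,
      show s ^ (-(α + 1)) * s ^ ((1:ℝ)/2) / (2 * Real.pi * s)
        = s ^ (-(α + 1)) * s ^ ((1:ℝ)/2) * s ^ (-1 : ℝ) / (2 * Real.pi) by
          rw [Real.rpow_neg_one]; field_simp,
      ← Real.rpow_add hs, ← Real.rpow_add hs,
      show -(α + 1) + 1/2 + (-1 : ℝ) = -(α + 1/2 + 1) by ring]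
  rw [show 1 / Real.sqrt (2*Real.pi*s) * (β ^ α / Real.Gamma α *
        (Real.sqrt γ / Real.sqrt (2*Real.pi*s)) * s ^ (-(α + 1)) *
        Real.exp (-((β + γ * (y - δ)^2 / (2 * (1 + γ))) * s⁻¹))) *
        (Real.sqrt (2*Real.pi/(1+γ)) * Real.sqrt s)
      = (β ^ α / Real.Gamma α) * (Real.sqrt γ * Real.sqrt (2*Real.pi/(1+γ))) *
        (s ^ (-(α + 1)) * Real.sqrt s / (Real.sqrt (2*Real.pi*s) * Real.sqrt (2*Real.pi*s))) *
        Real.exp (-((β + γ * (y - δ)^2 / (2 * (1 + γ))) * s⁻¹)) by ring,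
    hss, hpow]
  ring

end NigInner

/-- The evidential negative log-likelihood loss equals the negative logarithm of the
NIG model evidence. -/
theorem nigPdf_nll_loss (y δ γ α β : ℝ) (hγ : 0 < γ) (hα : 0 < α) (hβ : 0 < β) :
    let Ω : ℝ := 2 * β * (1 + γ);
    let Ψ : ℝ := Real.Gamma α / Real.Gamma (α + 1 / 2);
    -Real.log (∫ s in Set.Ioi (0 : ℝ), ∫ μ : ℝ, gaussPdf y μ s * nigPdf δ γ α β μ s)
      = (1 / 2) * Real.log (Real.pi / γ) - α * Real.log Ω
          + (α + 1 / 2) * Real.log ((y - δ) ^ 2 * γ + Ω) + Real.log Ψ := by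
  intro Ω Ψ
  show -Real.log (∫ s in Set.Ioi (0 : ℝ), ∫ μ : ℝ, gaussPdf y μ s * nigPdf δ γ α β μ s)
      = (1 / 2) * Real.log (Real.pi / γ) - α * Real.log (2 * β * (1 + γ))
          + (α + 1 / 2) * Real.log ((y - δ) ^ 2 * γ + 2 * β * (1 + γ))
          + Real.log (Real.Gamma α / Real.Gamma (α + 1 / 2))
  have h1γ : (0:ℝ) < 1 + γ := by linarith
  have hπ : (0:ℝ) < Real.pi := Real.pi_pos
  have hr : (0:ℝ) < β + γ * (y - δ)^2 / (2 * (1 + γ)) := by positivity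
  have hΓa : (0:ℝ) < Real.Gamma α := Real.Gamma_pos_of_pos hα
  have hΓb : (0:ℝ) < Real.Gamma (α + 1/2) := Real.Gamma_pos_of_pos (by linarith)
  have hβα : (0:ℝ) < β ^ α := Real.rpow_pos_of_pos hβ α
  have hsγ : (0:ℝ) < Real.sqrt γ := Real.sqrt_pos.2 hγ
  have hs2 : (0:ℝ) < Real.sqrt (2 * Real.pi / (1 + γ)) := Real.sqrt_pos.2 (by positivity)
  have hC : (0:ℝ) < (1 / (β + γ * (y - δ)^2 / (2 * (1 + γ)))) ^ (α + 1/2) :=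
    Real.rpow_pos_of_pos (by positivity) _
  have hI : (∫ s in Set.Ioi (0 : ℝ), ∫ μ : ℝ, gaussPdf y μ s * nigPdf δ γ α β μ s)
      = (β ^ α / Real.Gamma α *
          (Real.sqrt γ * Real.sqrt (2 * Real.pi / (1 + γ)) / (2 * Real.pi))) *
        ((1 / (β + γ * (y - δ)^2 / (2 * (1 + γ)))) ^ (α + 1/2) * Real.Gamma (α + 1/2)) := by
    rw [setIntegral_congr_fun measurableSet_Ioi
        (fun s hs => nig_inner_eq y δ γ α β s hγ hs),
      integral_const_mul, nig_integral_B (by linarith : (0:ℝ) < α + 1/2) hr]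
  rw [hI]
  -- expand the logarithm of the left-hand side
  have lA : Real.log (β ^ α / Real.Gamma α) = α * Real.log β - Real.log (Real.Gamma α) := by
    rw [Real.log_div hβα.ne' hΓa.ne', Real.log_rpow hβ]
  have lB : Real.log (Real.sqrt γ * Real.sqrt (2 * Real.pi / (1 + γ)) / (2 * Real.pi))
      = Real.log γ / 2 + (Real.log 2 + Real.log Real.pi - Real.log (1 + γ)) / 2
        - (Real.log 2 + Real.log Real.pi) := by
    rw [Real.log_div (by positivity) (by positivity), Real.log_mul hsγ.ne' hs2.ne',
      Real.log_sqrt hγ.le, Real.log_sqrt (by positivity),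
      Real.log_div (by positivity) h1γ.ne', Real.log_mul two_ne_zero hπ.ne']
  have lC : Real.log ((1 / (β + γ * (y - δ)^2 / (2 * (1 + γ)))) ^ (α + 1/2))
      = -((α + 1/2) * Real.log (β + γ * (y - δ)^2 / (2 * (1 + γ)))) := by
    rw [Real.log_rpow (by positivity), Real.log_div one_ne_zero hr.ne', Real.log_one]
    ring
  rw [Real.log_mul (by positivity) (by positivity),
    Real.log_mul (by positivity) hΓb.ne',
    Real.log_mul (by positivity) (by positivity), lA, lB, lC]
  -- expand the logarithm of the right-hand side
  have r1 : Real.log (Real.pi / γ) = Real.log Real.pi - Real.log γ :=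
    Real.log_div hπ.ne' hγ.ne'
  have r2 : Real.log (2 * β * (1 + γ)) = Real.log 2 + Real.log β + Real.log (1 + γ) := by
    rw [Real.log_mul (by positivity) h1γ.ne', Real.log_mul two_ne_zero hβ.ne']
  have r3 : Real.log ((y - δ) ^ 2 * γ + 2 * β * (1 + γ))
      = Real.log 2 + Real.log (1 + γ)
        + Real.log (β + γ * (y - δ)^2 / (2 * (1 + γ))) := by
    rw [show (y - δ) ^ 2 * γ + 2 * β * (1 + γ)
        = 2 * (1 + γ) * (β + γ * (y - δ)^2 / (2 * (1 + γ))) by field_simp; ring,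
      Real.log_mul (by positivity) hr.ne', Real.log_mul two_ne_zero h1γ.ne']
  have r4 : Real.log (Real.Gamma α / Real.Gamma (α + 1/2))
      = Real.log (Real.Gamma α) - Real.log (Real.Gamma (α + 1/2)) :=
    Real.log_div hΓa.ne' hΓb.ne'
  rw [r1, r2, r3, r4]
  ring
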